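/- For every real ε > 0 there exist a constant K > 0 and thresholds N₀, Δ₀ such that for all integers N ≥ N₀ and every finite simple graph G with ⌈N(1+ε)⌉ vertices and maximal degree Δ ≥ Δ₀, and every integer q with q > K·Δ, the graph G □ K_q is VD_N. -/

import Mathlib

/-- The closed neighborhood `N•(v) = N(v) ∪ {v}` of a vertex, as a `Finset`. -/
def SimpleGraph.closedNbhdFinset {V : Type*} [Fintype V] [DecidableEq V] (G : SimpleGraph V)
    [DecidableRel G.Adj] (v : V) : Finset V :=
  insert v (G.neighborFinset v)

/-- `VD G s k` means that the induced subgraph of `G` on the vertex set `s` has the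
graph property `VD_k`: every (induced sub)graph is `VD_0`; a graph with exactly `k`
vertices and no edges is `VD_k`; and if there is a vertex `v` such that deleting `v`
yields a `VD_k` graph and deleting the closed neighborhood of `v` yields a `VD_{k-1}`
graph, then the graph is `VD_k`. -/
inductive SimpleGraph.VD {V : Type*} [Fintype V] [DecidableEq V] (G : SimpleGraph V)
    [DecidableRel G.Adj] : Finset V → ℕ → Prop
  | zero (s : Finset V) : SimpleGraph.VD G s 0
  | edgeless (s : Finset V) (k : ℕ) (hcard : s.card = k)
      (h : ∀ u ∈ s, ∀ w ∈ s, ¬ G.Adj u w) : SimpleGraph.VD G s k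
  | step (s : Finset V) (k : ℕ) (v : V) (hv : v ∈ s)
      (hdel : SimpleGraph.VD G (s.erase v) (k + 1))
      (hnbr : SimpleGraph.VD G (s \ G.closedNbhdFinset v) k) : SimpleGraph.VD G s (k + 1)


instance boxProdDecidableAdj {V W : Type*} (G : SimpleGraph V) (H : SimpleGraph W)
    [DecidableRel G.Adj] [DecidableRel H.Adj] [DecidableEq V] [DecidableEq W] :
    DecidableRel (G □ H).Adj := fun x y =>
  decidable_of_iff (G.Adj x.1 y.1 ∧ x.2 = y.2 ∨ H.Adj x.2 y.2 ∧ x.1 = y.1) Iff.rfl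

set_option linter.unusedSectionVars false

attribute [local instance 0] Classical.propDecidable

namespace VDwork

/-- Lemma A: an edgeless set of size at least `k` is `VD k`. -/
theorem vd_of_edgeless {V : Type*} [Fintype V] [DecidableEq V] (G : SimpleGraph V)
    [DecidableRel G.Adj] :
    ∀ (n : ℕ) (s : Finset V) (k : ℕ), s.card ≤ n →
      (∀ u ∈ s, ∀ w ∈ s, ¬ G.Adj u w) → k ≤ s.card → G.VD s k := by
  intro n
  induction n with
  | zero =>
    intro s k h1 h2 h3
    have : s.card = k := by omega
    exact SimpleGraph.VD.edgeless s k this h2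
  | succ n ih =>
    intro s k h1 h2 h3
    rcases eq_or_lt_of_le h3 with heq | hlt
    · exact SimpleGraph.VD.edgeless s k heq.symm h2
    · have hne : s.Nonempty := Finset.card_pos.mp (lt_of_le_of_lt (Nat.zero_le k) hlt)
      obtain ⟨v, hv⟩ := hne
      have herase : (s.erase v).card = s.card - 1 := Finset.card_erase_of_mem hv
      have hsdiff : s \ G.closedNbhdFinset v = s.erase v := by
        ext w
        simp only [Finset.mem_sdiff, Finset.mem_erase, SimpleGraph.closedNbhdFinset,
          Finset.mem_insert, SimpleGraph.mem_neighborFinset]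
        constructor
        · rintro ⟨hw, hnot⟩
          exact ⟨fun h => hnot (Or.inl h), hw⟩
        · rintro ⟨hne, hw⟩
          exact ⟨hw, fun h => h.elim hne (fun hadj => h2 v hv w hw hadj)⟩
      have h2' : ∀ u ∈ s.erase v, ∀ w ∈ s.erase v, ¬ G.Adj u w := fun u hu w hw =>
        h2 u (Finset.mem_of_mem_erase hu) w (Finset.mem_of_mem_erase hw)
      match k with
      | 0 => exact SimpleGraph.VD.zero s
      | k + 1 =>
        refine SimpleGraph.VD.step s k v hv ?_ ?_
        · exact ih (s.erase v) (k+1) (by omega) h2' (by omega)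
        · rw [hsdiff]
          exact ih (s.erase v) k (by omega) h2' (by omega)




variable {V : Type*} [Fintype V] [DecidableEq V] (G : SimpleGraph V) [DecidableRel G.Adj]
  {q : ℕ} (R0 : ℕ)

/-- Columns present in row `u`. -/
def Row (s : Finset (V × Fin q)) (u : V) : Finset (Fin q) :=
  (s.filter fun p => p.1 = u).image Prod.snd

/-- Rows present in `s`. -/
def RS (s : Finset (V × Fin q)) : Finset V := s.image Prod.fst

lemma mem_Row {s : Finset (V × Fin q)} {u : V} {j : Fin q} :
    j ∈ Row s u ↔ (u, j) ∈ s := by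
  unfold Row
  simp only [Finset.mem_image, Finset.mem_filter]
  constructor
  · rintro ⟨⟨a, b⟩, ⟨hp, rfl⟩, rfl⟩; exact hp
  · intro h; exact ⟨(u, j), ⟨h, rfl⟩, rfl⟩

lemma mem_RS {s : Finset (V × Fin q)} {u : V} :
    u ∈ RS s ↔ ∃ j, (u, j) ∈ s := by
  unfold RS
  simp only [Finset.mem_image]
  constructor
  · rintro ⟨⟨a, b⟩, hp, rfl⟩; exact ⟨b, hp⟩
  · rintro ⟨j, hj⟩; exact ⟨(u, j), hj, rfl⟩

lemma mem_RS_of_mem {s : Finset (V × Fin q)} {u : V} {j : Fin q} (h : (u, j) ∈ s) :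
    u ∈ RS s := mem_RS.mpr ⟨j, h⟩

lemma RS_mono {s d : Finset (V × Fin q)} (h : d ⊆ s) : RS d ⊆ RS s := by
  intro u hu
  rw [mem_RS] at hu ⊢
  obtain ⟨j, hj⟩ := hu
  exact ⟨j, h hj⟩

/-- Neighbours of `u` among present rows. -/
def nbR (s : Finset (V × Fin q)) (u : V) : Finset V :=
  (G.neighborFinset u).filter (· ∈ RS s)

lemma mem_nbR {s : Finset (V × Fin q)} {u x : V} :
    x ∈ nbR G s u ↔ G.Adj u x ∧ x ∈ RS s := by
  unfold nbR; simp [SimpleGraph.mem_neighborFinset]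

def pinBit (s : Finset (V × Fin q)) (u : V) (oc : Option (Fin q)) : ℕ :=
  oc.elim 0 (fun c => if (u, c) ∈ s then 1 else 0)

@[simp] lemma pinBit_none (s : Finset (V × Fin q)) (u : V) : pinBit s u none = 0 := rfl
@[simp] lemma pinBit_some (s : Finset (V × Fin q)) (u : V) (c : Fin q) :
    pinBit s u (some c) = if (u, c) ∈ s then 1 else 0 := rfl

lemma pinBit_le_one (s : Finset (V × Fin q)) (u : V) (oc : Option (Fin q)) :
    pinBit s u oc ≤ 1 := by
  cases oc with
  | none => simp
  | some c => simp only [pinBit_some]; split <;> omega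

lemma pinBit_mono {s d : Finset (V × Fin q)} (h : d ⊆ s) (u : V) (oc : Option (Fin q)) :
    pinBit d u oc ≤ pinBit s u oc := by
  cases oc with
  | none => exact le_rfl
  | some c =>
    simp only [pinBit_some]
    by_cases hc : (u, c) ∈ d
    · simp [hc, h hc]
    · simp only [hc, if_false]; omega

/-- weight of neighbour `x` seen from `u`. -/
def wtf (s : Finset (V × Fin q)) (τ : V → ℕ) (π : V → Option (Fin q)) (u x : V) : ℕ :=
  1 + τ x + pinBit s u (π x)

lemma one_le_wtf (s : Finset (V × Fin q)) (τ : V → ℕ) (π : V → Option (Fin q)) (u x : V) :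
    1 ≤ wtf s τ π u x := by unfold wtf; omega

/-- `cmplAt G s u oc`: if `u` is pinned at `oc = some c`, no present neighbour row holds `c`. -/
def cmplAt (s : Finset (V × Fin q)) (u : V) (oc : Option (Fin q)) : Prop :=
  oc.elim True (fun c => ∀ w, G.Adj u w → (w, c) ∉ s)

@[simp] lemma cmplAt_none (s : Finset (V × Fin q)) (u : V) : cmplAt G s u none := trivial
@[simp] lemma cmplAt_some {s : Finset (V × Fin q)} {u : V} {c : Fin q} :
    cmplAt G s u (some c) ↔ ∀ w, G.Adj u w → (w, c) ∉ s := Iff.rfl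

lemma cmplAt_mono {s d : Finset (V × Fin q)} (h : d ⊆ s) (u : V) (oc : Option (Fin q)) :
    cmplAt G s u oc → cmplAt G d u oc := by
  cases oc with
  | none => intro _; simp
  | some c =>
    intro hc w hw hmem
    exact hc w hw (h hmem)

noncomputable def phiA (s : Finset (V × Fin q)) (u : V) (oc : Option (Fin q)) (t : ℕ) : ℕ :=
  oc.elim t (fun c => if cmplAt G s u (some c) then R0 else t + 1)

@[simp] lemma phiA_none (s : Finset (V × Fin q)) (u : V) (t : ℕ) :
    phiA G R0 s u none t = t := rfl
lemma phiA_some (s : Finset (V × Fin q)) (u : V) (c : Fin q) (t : ℕ) :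
    phiA G R0 s u (some c) t = if cmplAt G s u (some c) then R0 else t + 1 := rfl

noncomputable def Phi (s : Finset (V × Fin q)) (π : V → Option (Fin q)) (τ : V → ℕ) : ℕ :=
  ∑ u ∈ RS s, phiA G R0 s u (π u) (τ u)

lemma phiA_le_R0 {s : Finset (V × Fin q)} {u : V} {oc : Option (Fin q)} {t : ℕ}
    (ht : t ≤ R0) (hinc : ¬ cmplAt G s u oc → t + 1 ≤ R0) : phiA G R0 s u oc t ≤ R0 := by
  cases oc with
  | none => simpa using ht
  | some c =>
    rw [phiA_some]
    split
    · exact le_rfl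
    · next h => exact hinc h

/-- pointwise monotonicity of φ under shrinking the set. -/
lemma phiA_le {s d : Finset (V × Fin q)} (h : d ⊆ s) {u : V} {oc : Option (Fin q)} {t : ℕ}
    (hinc : ¬ cmplAt G s u oc → t + 1 ≤ R0) :
    phiA G R0 s u oc t ≤ phiA G R0 d u oc t := by
  cases oc with
  | none => exact le_rfl
  | some c =>
    rw [phiA_some, phiA_some]
    by_cases hc : cmplAt G s u (some c)
    · have : cmplAt G d u (some c) := cmplAt_mono G h u _ hc
      simp [hc, this]
    · have h1 : t + 1 ≤ R0 := hinc hc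
      simp only [hc, if_false]
      split
      · exact h1
      · exact le_rfl

lemma card_eq_sum_Row (s : Finset (V × Fin q)) :
    s.card = ∑ u ∈ RS s, (Row s u).card := by
  rw [Finset.card_eq_sum_card_fiberwise (f := Prod.fst) (t := RS s)
    (fun p hp => mem_RS.mpr ⟨p.2, by simpa using hp⟩)]
  refine Finset.sum_congr rfl (fun u _ => ?_)
  unfold Row
  rw [Finset.card_image_of_injOn]
  intro p hp r hr hpr
  simp only [Finset.mem_coe, Finset.mem_filter] at hp hr
  exact Prod.ext (hp.2.trans hr.2.symm) hpr

/-- The invariant. -/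
structure Inv (s : Finset (V × Fin q)) (k : ℕ) (π : V → Option (Fin q)) (τ : V → ℕ) : Prop where
  i0 : (R0 + 1) * k ≤ Phi G R0 s π τ
  i1 : ∀ u c, u ∈ RS s → π u = some c → (u, c) ∈ s
  i2 : ∀ u, u ∈ RS s → ((π u = none ∧ 1 ≤ τ u) ∨ ¬ cmplAt G s u (π u)) →
        2 + ∑ x ∈ nbR G s u, wtf s τ π u x ≤ (Row s u).card
  i3 : ∀ u, τ u ≤ R0
  i3b : ∀ u, u ∈ RS s → ¬ cmplAt G s u (π u) → τ u + 1 ≤ R0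
  i4 : ∀ u w, u ∈ RS s → w ∈ RS s → ¬ cmplAt G s u (π u) → ¬ cmplAt G s w (π w) → u = w




open SimpleGraph

variable {V : Type*} [Fintype V] [DecidableEq V] (G : SimpleGraph V) [DecidableRel G.Adj]
  {q : ℕ} (R0 : ℕ)

lemma mem_closedNbhd (x : V) (c : Fin q) (a : V) (b : Fin q) :
    (a, b) ∈ (G □ (⊤ : SimpleGraph (Fin q))).closedNbhdFinset (x, c) ↔
      a = x ∨ (b = c ∧ G.Adj x a) := by
  unfold SimpleGraph.closedNbhdFinset
  simp only [Finset.mem_insert, SimpleGraph.mem_neighborFinset, SimpleGraph.boxProd_adj,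
    SimpleGraph.top_adj, Prod.mk.injEq]
  constructor
  · rintro (⟨h1, _⟩ | ⟨hadj, hcb⟩ | ⟨_, hxa⟩)
    · exact Or.inl h1
    · exact Or.inr ⟨hcb.symm, hadj⟩
    · exact Or.inl hxa.symm
  · rintro (rfl | ⟨rfl, hadj⟩)
    · by_cases hbc : b = c
      · exact Or.inl ⟨rfl, hbc⟩
      · exact Or.inr (Or.inr ⟨fun h => hbc h.symm, rfl⟩)
    · exact Or.inr (Or.inl ⟨hadj, rfl⟩)

lemma mem_sideChild {s : Finset (V × Fin q)} (x : V) (c : Fin q) (a : V) (b : Fin q) :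
    (a, b) ∈ s \ (G □ (⊤ : SimpleGraph (Fin q))).closedNbhdFinset (x, c) ↔
      (a, b) ∈ s ∧ a ≠ x ∧ ¬ (b = c ∧ G.Adj x a) := by
  rw [Finset.mem_sdiff, mem_closedNbhd]
  constructor
  · rintro ⟨hs, hn⟩
    exact ⟨hs, fun h => hn (Or.inl h), fun h => hn (Or.inr h)⟩
  · rintro ⟨hs, h1, h2⟩
    exact ⟨hs, fun h => h.elim h1 h2⟩

lemma Row_erase_self (s : Finset (V × Fin q)) (x : V) (c : Fin q) :
    Row (s.erase (x, c)) x = (Row s x).erase c := by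
  ext j
  rw [mem_Row, Finset.mem_erase, Finset.mem_erase, mem_Row]
  constructor
  · rintro ⟨hne, hs⟩
    exact ⟨fun h => hne (by rw [h]), hs⟩
  · rintro ⟨hne, hs⟩
    exact ⟨fun h => hne (congrArg Prod.snd h), hs⟩

lemma Row_erase_other {s : Finset (V × Fin q)} {x u : V} (c : Fin q) (h : u ≠ x) :
    Row (s.erase (x, c)) u = Row s u := by
  ext j
  rw [mem_Row, Finset.mem_erase, mem_Row]
  constructor
  · rintro ⟨_, hs⟩; exact hs
  · intro hs; exact ⟨fun hh => h (congrArg Prod.fst hh), hs⟩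

lemma Row_side_adj {s : Finset (V × Fin q)} {x u : V} {c : Fin q} (h : G.Adj x u) :
    Row (s \ (G □ (⊤ : SimpleGraph (Fin q))).closedNbhdFinset (x, c)) u
      = (Row s u).erase c := by
  have hne : u ≠ x := (G.ne_of_adj h).symm
  ext j
  rw [mem_Row, mem_sideChild, Finset.mem_erase, mem_Row]
  constructor
  · rintro ⟨hs, _, hn⟩
    exact ⟨fun hj => hn ⟨hj, h⟩, hs⟩
  · rintro ⟨hj, hs⟩
    exact ⟨hs, hne, fun hh => hj hh.1⟩

lemma Row_side_nonadj {s : Finset (V × Fin q)} {x u : V} {c : Fin q} (hne : u ≠ x)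
    (h : ¬ G.Adj x u) :
    Row (s \ (G □ (⊤ : SimpleGraph (Fin q))).closedNbhdFinset (x, c)) u = Row s u := by
  ext j
  rw [mem_Row, mem_sideChild, mem_Row]
  constructor
  · rintro ⟨hs, _, _⟩; exact hs
  · intro hs; exact ⟨hs, hne, fun hh => h hh.2⟩

lemma not_mem_RS_side (s : Finset (V × Fin q)) (x : V) (c : Fin q) :
    x ∉ RS (s \ (G □ (⊤ : SimpleGraph (Fin q))).closedNbhdFinset (x, c)) := by
  rw [mem_RS]
  rintro ⟨j, hj⟩
  rw [mem_sideChild] at hj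
  exact hj.2.1 rfl

/-- Sum comparison: subset, pointwise `≤`, and one strict drop. -/
lemma sum_drop_one {α : Type*} [DecidableEq α] {A' A : Finset α} {f f' : α → ℕ}
    (hsub : A' ⊆ A) (hpt : ∀ a ∈ A', f' a ≤ f a) {w : α} (hw : w ∈ A')
    (hdrop : f' w + 1 ≤ f w) :
    (∑ a ∈ A', f' a) + 1 ≤ ∑ a ∈ A, f a := by
  rw [← Finset.sum_erase_add A' f' hw, ← Finset.sum_erase_add A f (hsub hw)]
  have h1 : ∑ a ∈ A'.erase w, f' a ≤ ∑ a ∈ A.erase w, f a := by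
    calc ∑ a ∈ A'.erase w, f' a ≤ ∑ a ∈ A'.erase w, f a :=
          Finset.sum_le_sum (fun a ha => hpt a (Finset.mem_of_mem_erase ha))
      _ ≤ ∑ a ∈ A.erase w, f a :=
          Finset.sum_le_sum_of_subset (Finset.erase_subset_erase w hsub)
  omega

lemma sum_le_of_subset_pt {α : Type*} {A' A : Finset α} {f f' : α → ℕ}
    (hsub : A' ⊆ A) (hpt : ∀ a ∈ A', f' a ≤ f a) :
    ∑ a ∈ A', f' a ≤ ∑ a ∈ A, f a :=
  le_trans (Finset.sum_le_sum hpt) (Finset.sum_le_sum_of_subset hsub)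


lemma mem_RS_iff_row {s : Finset (V × Fin q)} {u : V} :
    u ∈ RS s ↔ (Row s u).Nonempty := by
  rw [mem_RS]
  constructor
  · rintro ⟨j, hj⟩; exact ⟨j, mem_Row.mpr hj⟩
  · rintro ⟨j, hj⟩; exact ⟨j, mem_Row.mp hj⟩

lemma wtf_mono {s d : Finset (V × Fin q)} (h : d ⊆ s) (τ : V → ℕ) (π : V → Option (Fin q))
    (u x : V) : wtf d τ π u x ≤ wtf s τ π u x := by
  unfold wtf
  have := pinBit_mono h u (π x)
  omega

lemma nbR_mono {s d : Finset (V × Fin q)} (h : d ⊆ s) (u : V) :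
    nbR G d u ⊆ nbR G s u := by
  intro x hx
  rw [mem_nbR] at hx ⊢
  exact ⟨hx.1, RS_mono h hx.2⟩

lemma sum_drop_notmem {α : Type*} [DecidableEq α] {A' A : Finset α} {f f' : α → ℕ}
    (hsub : A' ⊆ A) {x : α} (hxA : x ∈ A) (hxA' : x ∉ A')
    (hpt : ∀ a ∈ A', f' a ≤ f a) (hfx : 1 ≤ f x) :
    (∑ a ∈ A', f' a) + 1 ≤ ∑ a ∈ A, f a := by
  have hsub2 : A' ⊆ A.erase x := fun a ha =>
    Finset.mem_erase.mpr ⟨fun h => hxA' (h ▸ ha), hsub ha⟩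
  have h1 : ∑ a ∈ A', f' a ≤ ∑ a ∈ A.erase x, f a :=
    sum_le_of_subset_pt hsub2 hpt
  have h2 : (∑ a ∈ A.erase x, f a) + f x = ∑ a ∈ A, f a := Finset.sum_erase_add A f hxA
  omega

lemma sum_le_single_bound {A : Finset V} {f : V → ℕ} {x₀ : V} {B : ℕ}
    (h0 : ∀ a ∈ A, a ≠ x₀ → f a = 0) (hB : ∀ a ∈ A, a = x₀ → f a ≤ B) :
    ∑ a ∈ A, f a ≤ B := by
  calc ∑ a ∈ A, f a ≤ ∑ a ∈ A, (if a = x₀ then B else 0) := by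
        refine Finset.sum_le_sum (fun a ha => ?_)
        by_cases hax : a = x₀
        · subst hax; simp [hB a ha rfl]
        · simp [hax, h0 a ha hax]
    _ ≤ B := by
        rw [Finset.sum_ite_eq' A x₀ (fun _ => B)]
        split <;> omega

/-- Master Φ-comparison lemma. -/
lemma Phi_le_of {s d : Finset (V × Fin q)} (hsub : d ⊆ s) (π : V → Option (Fin q)) (τ : V → ℕ)
    (hi3b : ∀ u, u ∈ RS s → ¬ cmplAt G s u (π u) → τ u + 1 ≤ R0)
    (x₀ : V) (B : ℕ)
    (hB : x₀ ∈ RS s → x₀ ∉ RS d → phiA G R0 s x₀ (π x₀) (τ x₀) ≤ B)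
    (hdead : ∀ u, u ∈ RS s → u ∉ RS d → u ≠ x₀ → phiA G R0 s u (π u) (τ u) = 0) :
    Phi G R0 s π τ ≤ Phi G R0 d π τ + B := by
  have hRS : RS d ⊆ RS s := RS_mono hsub
  have hsplit : (∑ u ∈ RS s \ RS d, phiA G R0 s u (π u) (τ u))
      + ∑ u ∈ RS d, phiA G R0 s u (π u) (τ u) = Phi G R0 s π τ :=
    Finset.sum_sdiff hRS
  have h1 : ∑ u ∈ RS s \ RS d, phiA G R0 s u (π u) (τ u) ≤ B := by
    refine sum_le_single_bound (x₀ := x₀) (fun a ha hne => ?_) (fun a ha hax => ?_)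
    · rw [Finset.mem_sdiff] at ha
      exact hdead a ha.1 ha.2 hne
    · rw [Finset.mem_sdiff] at ha
      exact hax ▸ hB (hax ▸ ha.1) (hax ▸ ha.2)
  have h2 : ∑ u ∈ RS d, phiA G R0 s u (π u) (τ u) ≤ Phi G R0 d π τ := by
    refine Finset.sum_le_sum (fun u hu => ?_)
    exact phiA_le G R0 hsub (hi3b u (hRS hu))
  omega

theorem main_lemma (hR0 : 1 ≤ R0) :
    ∀ (M : ℕ) (s : Finset (V × Fin q)) (k : ℕ) (π : V → Option (Fin q)) (τ : V → ℕ),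
      3 * s.card + ((RS s).filter fun u => π u = none).card ≤ M →
      Inv G R0 s k π τ → (G □ (⊤ : SimpleGraph (Fin q))).VD s k := by
  intro M
  induction M with
  | zero =>
    intro s k π τ hM inv
    have hcard : s.card = 0 := by omega
    have hsempty : s = ∅ := Finset.card_eq_zero.mp hcard
    have hRS : RS s = ∅ := by rw [hsempty]; rfl
    have hPhi : Phi G R0 s π τ = 0 := by unfold Phi; rw [hRS]; simp
    have hk : k = 0 := by
      have h0 := inv.i0
      rw [hPhi] at h0
      have := Nat.eq_zero_of_le_zero h0
      rcases Nat.mul_eq_zero.mp this with h | h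
      · omega
      · exact h
    rw [hk]; exact SimpleGraph.VD.zero s
  | succ M ih =>
    intro s k π τ hM inv
    match k with
    | 0 => exact SimpleGraph.VD.zero s
    | k + 1 =>
      by_cases hA : ∃ w0, w0 ∈ RS s ∧ ¬ cmplAt G s w0 (π w0)
      · -- CASE A : pre-erasure step for the unique incomplete pinned row
        obtain ⟨w0, hw0RS, hw0inc⟩ := hA
        obtain ⟨cw, hπw⟩ : ∃ c, π w0 = some c := by
          rcases h : π w0 with _ | c
          · rw [h] at hw0inc
            exact absurd (cmplAt_none G s w0) hw0inc
          · exact ⟨c, rfl⟩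
        have hw0inc' : ¬ cmplAt G s w0 (some cw) := by rw [← hπw]; exact hw0inc
        obtain ⟨x0, hadj, hx0cw⟩ : ∃ x, G.Adj w0 x ∧ (x, cw) ∈ s := by
          rw [cmplAt_some] at hw0inc'
          push_neg at hw0inc'
          exact hw0inc'
        have hw0inc' : ¬ cmplAt G s w0 (some cw) := by rw [← hπw]; exact hw0inc
        have hwx : w0 ≠ x0 := G.ne_of_adj hadj
        have hx0RS : x0 ∈ RS s := mem_RS_of_mem hx0cw
        have hw0pin : (w0, cw) ∈ s := inv.i1 w0 cw hw0RS hπw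
        have hcomp : ∀ u, u ∈ RS s → u ≠ w0 → cmplAt G s u (π u) := by
          intro u hu hne
          by_contra hinc
          exact hne (inv.i4 u w0 hu hw0RS hinc hw0inc)
        have hK2 : ∀ u, u ∈ RS s → u ≠ w0 → ∀ cu, π u = some cu → G.Adj x0 u → cu ≠ cw := by
          intro u hu hne cu hcu hadj' heq
          have hc := hcomp u hu hne
          rw [hcu] at hc
          exact (hc x0 hadj'.symm) (heq ▸ hx0cw)
        have hK3 : ∀ cx, π x0 = some cx → cx ≠ cw := by
          intro cx hcx heq
          have hc := hcomp x0 hx0RS (Ne.symm hwx)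
          rw [hcx] at hc
          exact (hc w0 hadj.symm) (heq ▸ hw0pin)
        have hi2w := inv.i2 w0 hw0RS (Or.inr hw0inc)
        have hx0nb : x0 ∈ nbR G s w0 := (mem_nbR (G := G)).mpr ⟨hadj, hx0RS⟩
        have hw0row : 3 ≤ (Row s w0).card := by
          have h1 : 1 ≤ wtf s τ π w0 x0 := one_le_wtf s τ π w0 x0
          have h2 : wtf s τ π w0 x0 ≤ ∑ x ∈ nbR G s w0, wtf s τ π w0 x :=
            Finset.single_le_sum (fun i _ => Nat.zero_le _) hx0nb
          omega
        refine SimpleGraph.VD.step s k (x0, cw) hx0cw ?_ ?_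
        · -- main child : erase the pivot
          have hsub' : s.erase (x0, cw) ⊆ s := Finset.erase_subset _ _
          refine ih (s.erase (x0, cw)) (k+1) π τ ?_ ?_
          · have hc1 : (s.erase (x0, cw)).card = s.card - 1 :=
              Finset.card_erase_of_mem hx0cw
            have hu : (((RS (s.erase (x0, cw))).filter fun v => π v = none)).card ≤
                ((RS s).filter fun v => π v = none).card :=
              Finset.card_le_card (Finset.filter_subset_filter _ (RS_mono hsub'))
            have hpos : 1 ≤ s.card := Finset.card_pos.mpr ⟨_, hx0cw⟩
            omega
          · constructor
            · -- i0
              have hb := Phi_le_of G R0 hsub' π τ inv.i3b x0 0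
                (fun hRSx hdead => by
                  rcases h : π x0 with _ | cx
                  · rw [phiA_none]
                    by_contra hτ
                    have hτ1 : 1 ≤ τ x0 := by omega
                    have h2 := inv.i2 x0 hx0RS (Or.inl ⟨h, hτ1⟩)
                    have hw0nb : w0 ∈ nbR G s x0 := (mem_nbR (G := G)).mpr ⟨hadj.symm, hw0RS⟩
                    have hge : 1 ≤ wtf s τ π x0 w0 := one_le_wtf s τ π x0 w0
                    have hsum : wtf s τ π x0 w0 ≤ ∑ x ∈ nbR G s x0, wtf s τ π x0 x :=
                      Finset.single_le_sum (fun i _ => Nat.zero_le _) hw0nb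
                    have hcard3 : 3 ≤ (Row s x0).card := by omega
                    refine hdead (mem_RS_iff_row.mpr ?_)
                    rw [Row_erase_self]
                    have := Finset.card_erase_of_mem (mem_Row.mpr hx0cw)
                    refine Finset.card_pos.mp ?_
                    omega
                  · exfalso
                    refine hdead (mem_RS_of_mem (Finset.mem_erase.mpr ⟨?_, inv.i1 x0 cx hx0RS h⟩))
                    intro heq
                    exact hK3 cx h (congrArg Prod.snd heq)
                  )
                (fun u hu hnot hne => by
                  exfalso
                  refine hnot (mem_RS_iff_row.mpr ?_)
                  rw [Row_erase_other cw hne]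
                  exact mem_RS_iff_row.mp hu)
              have h0 := inv.i0
              omega
            · intro v c hv hc
              have hvs : v ∈ RS s := RS_mono hsub' hv
              have hm : (v, c) ∈ s := inv.i1 v c hvs hc
              refine Finset.mem_erase.mpr ⟨?_, hm⟩
              intro heq
              have hvx : v = x0 := congrArg Prod.fst heq
              rw [hvx] at hc
              exact hK3 c hc (congrArg Prod.snd heq)
            · intro v hv hneeds
              have hvs : v ∈ RS s := RS_mono hsub' hv
              have hneeds' : (π v = none ∧ 1 ≤ τ v) ∨ ¬ cmplAt G s v (π v) := by
                rcases hneeds with h | hinc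
                · exact Or.inl h
                · exact Or.inr (fun hc => hinc (cmplAt_mono G hsub' v (π v) hc))
              have h2 := inv.i2 v hvs hneeds'
              by_cases hvx : v = x0
              · subst hvx
                rw [Row_erase_self]
                have hcwmem : cw ∈ Row s v := mem_Row.mpr hx0cw
                have hcard : ((Row s v).erase cw).card = (Row s v).card - 1 :=
                  Finset.card_erase_of_mem hcwmem
                have hw0nb' : w0 ∈ nbR G (s.erase (v, cw)) v := by
                  rw [mem_nbR]
                  refine ⟨hadj.symm, mem_RS_of_mem (Finset.mem_erase.mpr ⟨?_, hw0pin⟩)⟩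
                  intro heq
                  exact hwx (congrArg Prod.fst heq)
                have hdropw : wtf (s.erase (v, cw)) τ π v w0 + 1 ≤ wtf s τ π v w0 := by
                  have hnm : (v, cw) ∉ s.erase (v, cw) := fun hmem =>
                    (Finset.mem_erase.mp hmem).1 rfl
                  have hb1 : pinBit (s.erase (v, cw)) v (π w0) = 0 := by
                    rw [hπw, pinBit_some, if_neg hnm]
                  have hb2 : pinBit s v (π w0) = 1 := by
                    rw [hπw, pinBit_some, if_pos hx0cw]
                  unfold wtf
                  rw [hb1, hb2]
                have hsum := sum_drop_one (nbR_mono G hsub' v)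
                  (fun a _ => wtf_mono hsub' τ π v a) hw0nb' hdropw
                omega
              · rw [Row_erase_other cw hvx]
                have hsum := sum_le_of_subset_pt (nbR_mono G hsub' v)
                  (fun a _ => wtf_mono hsub' τ π v a)
                omega
            · exact inv.i3
            · intro v hv hinc
              exact inv.i3b v (RS_mono hsub' hv)
                (fun hc => hinc (cmplAt_mono G hsub' v (π v) hc))
            · intro v w hv hw hiv hiw
              exact inv.i4 v w (RS_mono hsub' hv) (RS_mono hsub' hw)
                (fun hc => hiv (cmplAt_mono G hsub' v (π v) hc))
                (fun hc => hiw (cmplAt_mono G hsub' w (π w) hc))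
        · -- side child : delete the closed neighbourhood, unpin w0
          set D := s \ (G □ (⊤ : SimpleGraph (Fin q))).closedNbhdFinset (x0, cw) with hD'
          have hsubD : D ⊆ s := Finset.sdiff_subset
          have hsurvpin : ∀ v, v ∈ RS s → v ≠ w0 → v ≠ x0 → ∀ cv, π v = some cv →
              (v, cv) ∈ D := by
            intro v hv hnw hnx cv hcv
            rw [hD', mem_sideChild]
            refine ⟨inv.i1 v cv hv hcv, hnx, ?_⟩
            rintro ⟨rfl, hadj'⟩
            exact hK2 v hv hnw cv hcv hadj' rfl
          have hRowDw0 : Row D w0 = (Row s w0).erase cw := Row_side_adj G hadj.symm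
          have hw0surv : w0 ∈ RS D := by
            refine mem_RS_iff_row.mpr ?_
            rw [hRowDw0]
            refine Finset.card_pos.mp ?_
            have h1 : (Row s w0).card ≤ ((Row s w0).erase cw).card + 1 := by
              by_cases hm : cw ∈ Row s w0
              · rw [Finset.card_erase_of_mem hm]
                have : 1 ≤ (Row s w0).card := by omega
                omega
              · rw [Finset.erase_eq_of_notMem hm]
                omega
            omega
          refine ih D k (Function.update π w0 none) τ ?_ ?_
          · -- measure
            have hDsub : D ⊆ s.erase (x0, cw) := by
              intro p hp
              rcases p with ⟨a, b⟩
              rw [hD', mem_sideChild] at hp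
              exact Finset.mem_erase.mpr
                ⟨fun h => hp.2.1 (congrArg Prod.fst h), hp.1⟩
            have hc1 : D.card ≤ s.card - 1 := by
              have := Finset.card_le_card hDsub
              rw [Finset.card_erase_of_mem hx0cw] at this
              exact this
            have hsubf : (RS D).filter (fun v => Function.update π w0 none v = none) ⊆
                insert w0 ((RS s).filter fun v => π v = none) := by
              intro v hv
              rw [Finset.mem_filter] at hv
              by_cases hvw : v = w0
              · exact Finset.mem_insert.mpr (Or.inl hvw)
              · rw [Function.update_of_ne hvw] at hv
                exact Finset.mem_insert.mpr (Or.inr (Finset.mem_filter.mpr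
                  ⟨RS_mono hsubD hv.1, hv.2⟩))
            have hu : (((RS D).filter fun v => Function.update π w0 none v = none)).card ≤
                ((RS s).filter fun v => π v = none).card + 1 := by
              have := Finset.card_le_card hsubf
              have := Finset.card_insert_le w0 ((RS s).filter fun v => π v = none)
              omega
            have hpos : 1 ≤ s.card := Finset.card_pos.mpr ⟨_, hx0cw⟩
            omega
          · have hπ'w0 : Function.update π w0 none w0 = none := Function.update_self _ _ _
            have hdeadzero : ∀ u, u ∈ RS s → u ∉ RS D → u ≠ x0 →
                phiA G R0 s u (π u) (τ u) = 0 := by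
              intro u hu hnot hne
              by_cases huw : u = w0
              · exact absurd (huw ▸ hw0surv) hnot
              rcases h : π u with _ | cu
              · rw [phiA_none]
                by_contra hτ
                have hτ1 : 1 ≤ τ u := by omega
                have h2 := inv.i2 u hu (Or.inl ⟨h, hτ1⟩)
                refine hnot (mem_RS_iff_row.mpr ?_)
                by_cases hadju : G.Adj x0 u
                · rw [hD', Row_side_adj G hadju]
                  have hx0nb' : x0 ∈ nbR G s u := (mem_nbR (G := G)).mpr ⟨hadju.symm, hx0RS⟩
                  have hge : 1 ≤ wtf s τ π u x0 := one_le_wtf s τ π u x0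
                  have hsum : wtf s τ π u x0 ≤ ∑ x ∈ nbR G s u, wtf s τ π u x :=
                    Finset.single_le_sum (fun i _ => Nat.zero_le _) hx0nb'
                  have h1 : (Row s u).card ≤ ((Row s u).erase cw).card + 1 := by
                    by_cases hm : cw ∈ Row s u
                    · rw [Finset.card_erase_of_mem hm]
                      have : 1 ≤ (Row s u).card := by omega
                      omega
                    · rw [Finset.erase_eq_of_notMem hm]
                      omega
                  refine Finset.card_pos.mp ?_
                  omega
                · rw [hD', Row_side_nonadj G hne hadju]
                  exact mem_RS_iff_row.mp hu
              · exact absurd (mem_RS_of_mem (hsurvpin u hu huw hne cu h)) hnot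
            constructor
            · -- i0
              have hRSD : RS D ⊆ RS s := RS_mono hsubD
              have hsplit : (∑ u ∈ RS s \ RS D, phiA G R0 s u (π u) (τ u))
                  + ∑ u ∈ RS D, phiA G R0 s u (π u) (τ u) = Phi G R0 s π τ :=
                Finset.sum_sdiff hRSD
              have h1 : ∑ u ∈ RS s \ RS D, phiA G R0 s u (π u) (τ u) ≤ R0 := by
                refine sum_le_single_bound (x₀ := x0) (fun a ha hne => ?_) (fun a ha hax => ?_)
                · rw [Finset.mem_sdiff] at ha
                  exact hdeadzero a ha.1 ha.2 hne
                · subst hax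
                  exact phiA_le_R0 G R0 (inv.i3 a) (fun hinc => inv.i3b a hx0RS hinc)
              have h2 : ∑ u ∈ RS D, phiA G R0 s u (π u) (τ u) ≤
                  Phi G R0 D (Function.update π w0 none) τ + 1 := by
                have hs1 : ∑ u ∈ (RS D).erase w0, phiA G R0 s u (π u) (τ u)
                    + phiA G R0 s w0 (π w0) (τ w0)
                    = ∑ u ∈ RS D, phiA G R0 s u (π u) (τ u) :=
                  Finset.sum_erase_add _ _ hw0surv
                have hs2 : ∑ u ∈ (RS D).erase w0,
                    phiA G R0 D u (Function.update π w0 none u) (τ u)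
                    + phiA G R0 D w0 (Function.update π w0 none w0) (τ w0)
                    = Phi G R0 D (Function.update π w0 none) τ :=
                  Finset.sum_erase_add _ _ hw0surv
                have hpt : ∑ u ∈ (RS D).erase w0, phiA G R0 s u (π u) (τ u) ≤
                    ∑ u ∈ (RS D).erase w0,
                      phiA G R0 D u (Function.update π w0 none u) (τ u) := by
                  refine Finset.sum_le_sum (fun u hu => ?_)
                  have huw : u ≠ w0 := (Finset.mem_erase.mp hu).1
                  rw [Function.update_of_ne huw]
                  exact phiA_le G R0 hsubD
                    (inv.i3b u (hRSD (Finset.mem_of_mem_erase hu)))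
                have hw0s : phiA G R0 s w0 (π w0) (τ w0) = τ w0 + 1 := by
                  rw [hπw, phiA_some, if_neg hw0inc']
                have hw0d : phiA G R0 D w0 (Function.update π w0 none w0) (τ w0) = τ w0 := by
                  rw [hπ'w0, phiA_none]
                omega
              have h0 := inv.i0
              have h3 : (R0+1) * (k+1) = (R0+1) * k + R0 + 1 := by ring
              omega
            · -- i1
              intro v c hv hc
              have hvnw : v ≠ w0 := by
                intro h
                rw [h, hπ'w0] at hc
                exact nomatch hc
              rw [Function.update_of_ne hvnw] at hc
              have hvnx : v ≠ x0 := by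
                intro h
                exact not_mem_RS_side G s x0 cw (hD' ▸ h ▸ hv)
              exact hsurvpin v (RS_mono hsubD hv) hvnw hvnx c hc
            · -- i2
              intro v hv hneeds
              have hvs : v ∈ RS s := RS_mono hsubD hv
              have hvnx : v ≠ x0 := by
                intro h
                exact not_mem_RS_side G s x0 cw (hD' ▸ h ▸ hv)
              have hneeds' : (π v = none ∧ 1 ≤ τ v) ∨ ¬ cmplAt G s v (π v) := by
                rcases hneeds with ⟨h1, h2⟩ | hinc
                · by_cases hvw : v = w0
                  · exact Or.inr (hvw ▸ hw0inc)
                  · rw [Function.update_of_ne hvw] at h1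
                    exact Or.inl ⟨h1, h2⟩
                · by_cases hvw : v = w0
                  · exact Or.inr (hvw ▸ hw0inc)
                  · rw [Function.update_of_ne hvw] at hinc
                    have hinc2 : ¬ cmplAt G s v (π v) :=
                      fun hc => hinc (cmplAt_mono G hsubD v (π v) hc)
                    exact Or.inr hinc2
              have h2 := inv.i2 v hvs hneeds'
              have hpt : ∀ y ∈ nbR G D v, wtf D τ (Function.update π w0 none) v y ≤
                  wtf s τ π v y := by
                intro y hy
                by_cases hyw : y = w0
                · unfold wtf
                  rw [hyw, hπ'w0, pinBit_none]
                  omega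
                · unfold wtf
                  rw [Function.update_of_ne hyw]
                  have := pinBit_mono hsubD v (π y)
                  omega
              by_cases hadjv : G.Adj x0 v
              · have hRowD : Row D v = (Row s v).erase cw := Row_side_adj G hadjv
                rw [hRowD]
                have hx0nb' : x0 ∈ nbR G s v := (mem_nbR (G := G)).mpr ⟨hadjv.symm, hx0RS⟩
                have hx0notin : x0 ∉ nbR G D v := by
                  intro h
                  exact not_mem_RS_side G s x0 cw (hD' ▸ ((mem_nbR (G := G)).mp h).2)
                have hsum := sum_drop_notmem (nbR_mono G hsubD v) hx0nb' hx0notin hpt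
                  (one_le_wtf s τ π v x0)
                have h1 : (Row s v).card ≤ ((Row s v).erase cw).card + 1 := by
                  by_cases hm : cw ∈ Row s v
                  · rw [Finset.card_erase_of_mem hm]
                    have : 1 ≤ (Row s v).card := by omega
                    omega
                  · rw [Finset.erase_eq_of_notMem hm]
                    omega
                omega
              · have hRowD : Row D v = Row s v := Row_side_nonadj G hvnx hadjv
                rw [hRowD]
                have hsum := sum_le_of_subset_pt (nbR_mono G hsubD v) hpt
                omega
            · exact inv.i3
            · -- i3b
              intro v hv hinc
              have hvnw : v ≠ w0 := by
                intro h
                rw [h, hπ'w0] at hinc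
                exact hinc (cmplAt_none G D v)
              rw [Function.update_of_ne hvnw] at hinc
              exact inv.i3b v (RS_mono hsubD hv)
                (fun hc => hinc (cmplAt_mono G hsubD v (π v) hc))
            · -- i4
              intro v w hv hw hiv hiw
              have hvnw : v ≠ w0 := by
                intro h
                rw [h, hπ'w0] at hiv
                exact hiv (cmplAt_none G D v)
              have hwnw : w ≠ w0 := by
                intro h
                rw [h, hπ'w0] at hiw
                exact hiw (cmplAt_none G D w)
              rw [Function.update_of_ne hvnw] at hiv
              rw [Function.update_of_ne hwnw] at hiw
              exact inv.i4 v w (RS_mono hsubD hv) (RS_mono hsubD hw)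
                (fun hc => hiv (cmplAt_mono G hsubD v (π v) hc))
                (fun hc => hiw (cmplAt_mono G hsubD w (π w) hc))
      · push_neg at hA
        -- every present row is complete
        by_cases hB : ∃ u, u ∈ RS s ∧ π u = none ∧ 1 ≤ τ u
        · -- CASE B : commit a fat row
          obtain ⟨u0, hu0RS, hπu0, hτu0⟩ := hB
          obtain ⟨c0, hc0⟩ := mem_RS_iff_row.mp hu0RS
          have hc0s : (u0, c0) ∈ s := mem_Row.mp hc0
          refine ih s (k+1) (Function.update π u0 (some c0))
            (Function.update τ u0 (τ u0 - 1)) ?_ ?_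
          · -- measure decreases: one fewer unpinned row
            have hsubf : (RS s).filter (fun v => Function.update π u0 (some c0) v = none) ⊆
                ((RS s).filter fun v => π v = none).erase u0 := by
              intro v hv
              rw [Finset.mem_filter] at hv
              have hvne : v ≠ u0 := by
                intro h
                rw [h, Function.update_self] at hv
                exact nomatch hv.2
              rw [Function.update_of_ne hvne] at hv
              exact Finset.mem_erase.mpr ⟨hvne, Finset.mem_filter.mpr hv⟩
            have hmem : u0 ∈ (RS s).filter fun v => π v = none :=
              Finset.mem_filter.mpr ⟨hu0RS, hπu0⟩
            have hcard : (((RS s).filter fun v => π v = none).erase u0).card =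
                ((RS s).filter fun v => π v = none).card - 1 :=
              Finset.card_erase_of_mem hmem
            have h1 : 1 ≤ ((RS s).filter fun v => π v = none).card :=
              Finset.card_pos.mpr ⟨u0, hmem⟩
            have h2 := Finset.card_le_card hsubf
            omega
          · constructor
            · -- i0
              have hpt : ∀ u ∈ RS s, phiA G R0 s u (π u) (τ u) ≤
                  phiA G R0 s u (Function.update π u0 (some c0) u)
                    (Function.update τ u0 (τ u0 - 1) u) := by
                intro u hu
                by_cases huu : u = u0
                · subst huu
                  rw [hπu0, Function.update_self, Function.update_self, phiA_none, phiA_some]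
                  split
                  · exact le_trans (inv.i3 u) (le_refl R0)
                  · omega
                · rw [Function.update_of_ne huu, Function.update_of_ne huu]
              have := Finset.sum_le_sum hpt
              have h0 := inv.i0
              unfold Phi at *
              omega
            · intro v c hv hc
              by_cases hvu : v = u0
              · subst hvu
                rw [Function.update_self] at hc
                have : c0 = c := by injection hc
                exact this ▸ hc0s
              · rw [Function.update_of_ne hvu] at hc
                exact inv.i1 v c hv hc
            · intro v hv hneeds
              have hneeds' : (π v = none ∧ 1 ≤ τ v) ∨ ¬ cmplAt G s v (π v) := by
                by_cases hvu : v = u0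
                · subst hvu
                  exact Or.inl ⟨hπu0, hτu0⟩
                · rcases hneeds with ⟨h1, h2⟩ | hinc
                  · rw [Function.update_of_ne hvu] at h1
                    rw [Function.update_of_ne hvu] at h2
                    exact Or.inl ⟨h1, h2⟩
                  · rw [Function.update_of_ne hvu] at hinc
                    exact Or.inr hinc
              have h2 := inv.i2 v hv hneeds'
              have hsum : ∑ x ∈ nbR G s v, wtf s (Function.update τ u0 (τ u0 - 1))
                  (Function.update π u0 (some c0)) v x ≤
                  ∑ x ∈ nbR G s v, wtf s τ π v x := by
                refine Finset.sum_le_sum (fun x hx => ?_)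
                by_cases hxu : x = u0
                · subst hxu
                  unfold wtf
                  rw [Function.update_self, Function.update_self, hπu0, pinBit_none]
                  have := pinBit_le_one s v (some c0)
                  omega
                · unfold wtf
                  rw [Function.update_of_ne hxu, Function.update_of_ne hxu]
              omega
            · intro u
              by_cases huu : u = u0
              · subst huu
                rw [Function.update_self]
                have := inv.i3 u
                omega
              · rw [Function.update_of_ne huu]
                exact inv.i3 u
            · intro v hv hinc
              by_cases hvu : v = u0
              · subst hvu
                rw [Function.update_self]
                have := inv.i3 v
                omega
              · rw [Function.update_of_ne hvu] at hinc
                rw [Function.update_of_ne hvu]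
                exact absurd (hA v hv) hinc
            · intro v w hv hw hiv hiw
              have hv0 : v = u0 := by
                by_contra hne
                rw [Function.update_of_ne hne] at hiv
                exact hiv (hA v hv)
              have hw0 : w = u0 := by
                by_contra hne
                rw [Function.update_of_ne hne] at hiw
                exact hiw (hA w hw)
              rw [hv0, hw0]
        · push_neg at hB
          by_cases hC : ∃ u, u ∈ RS s ∧ π u = none
          · -- CASE C : erase an entry of an expendable row
            obtain ⟨x0, hx0RS, hπx0⟩ := hC
            have hτx0 : τ x0 = 0 := by
              have := hB x0 hx0RS hπx0
              omega
            obtain ⟨j, hjmem⟩ := mem_RS_iff_row.mp hx0RS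
            have hjs : (x0, j) ∈ s := mem_Row.mp hjmem
            have hpinsurv : ∀ v, v ∈ RS s → ∀ cv, π v = some cv →
                ¬(cv = j ∧ G.Adj x0 v) := by
              rintro v hv cv hcv ⟨rfl, hadj⟩
              have hcm := hA v hv
              rw [hcv] at hcm
              exact (hcm x0 hadj.symm) hjs
            refine SimpleGraph.VD.step s k (x0, j) hjs ?_ ?_
            · -- erase child
              have hsub' : s.erase (x0, j) ⊆ s := Finset.erase_subset _ _
              refine ih (s.erase (x0, j)) (k+1) π τ ?_ ?_
              · have hc1 : (s.erase (x0, j)).card = s.card - 1 :=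
                  Finset.card_erase_of_mem hjs
                have hu : (((RS (s.erase (x0, j))).filter fun v => π v = none)).card ≤
                    ((RS s).filter fun v => π v = none).card :=
                  Finset.card_le_card (Finset.filter_subset_filter _ (RS_mono hsub'))
                have hpos : 1 ≤ s.card := Finset.card_pos.mpr ⟨_, hjs⟩
                omega
              · constructor
                · have hb := Phi_le_of G R0 hsub' π τ inv.i3b x0 0
                    (fun _ _ => by rw [hπx0, phiA_none, hτx0])
                    (fun u hu hnot hne => by
                      exfalso
                      refine hnot (mem_RS_iff_row.mpr ?_)
                      rw [Row_erase_other j hne]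
                      exact mem_RS_iff_row.mp hu)
                  have h0 := inv.i0
                  omega
                · intro v c hv hc
                  have hvs : v ∈ RS s := RS_mono hsub' hv
                  have hm : (v, c) ∈ s := inv.i1 v c hvs hc
                  refine Finset.mem_erase.mpr ⟨?_, hm⟩
                  intro heq
                  have hvx : v = x0 := congrArg Prod.fst heq
                  rw [hvx] at hc
                  rw [hπx0] at hc
                  exact nomatch hc
                · intro v hv hneeds
                  exfalso
                  have hvs : v ∈ RS s := RS_mono hsub' hv
                  rcases hneeds with ⟨hnone, hτv⟩ | hinc
                  · have := hB v hvs hnone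
                    omega
                  · exact hinc (cmplAt_mono G hsub' v (π v) (hA v hvs))
                · exact inv.i3
                · intro v hv hinc
                  exfalso
                  have hvs : v ∈ RS s := RS_mono hsub' hv
                  exact hinc (cmplAt_mono G hsub' v (π v) (hA v hvs))
                · intro v w hv hw hiv _
                  exfalso
                  have hvs : v ∈ RS s := RS_mono hsub' hv
                  exact hiv (cmplAt_mono G hsub' v (π v) (hA v hvs))
            · -- side child
              set D := s \ (G □ (⊤ : SimpleGraph (Fin q))).closedNbhdFinset (x0, j) with hD'
              have hsubD : D ⊆ s := Finset.sdiff_subset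
              have hDsurv : ∀ v, v ∈ RS s → v ≠ x0 → ∀ cv, π v = some cv → (v, cv) ∈ D := by
                intro v hv hne cv hcv
                rw [hD', mem_sideChild]
                exact ⟨inv.i1 v cv hv hcv, hne, hpinsurv v hv cv hcv⟩
              refine ih D k π τ ?_ ?_
              · have hDsub : D ⊆ s.erase (x0, j) := by
                  intro p hp
                  rcases p with ⟨a, b⟩
                  rw [hD', mem_sideChild] at hp
                  exact Finset.mem_erase.mpr
                    ⟨fun h => hp.2.1 (congrArg Prod.fst h), hp.1⟩
                have hc1 : D.card ≤ s.card - 1 := by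
                  have := Finset.card_le_card hDsub
                  rw [Finset.card_erase_of_mem hjs] at this
                  exact this
                have hu : (((RS D).filter fun v => π v = none)).card ≤
                    ((RS s).filter fun v => π v = none).card :=
                  Finset.card_le_card (Finset.filter_subset_filter _ (RS_mono hsubD))
                have hpos : 1 ≤ s.card := Finset.card_pos.mpr ⟨_, hjs⟩
                omega
              · constructor
                · have hb := Phi_le_of G R0 hsubD π τ inv.i3b x0 0
                    (fun _ _ => by rw [hπx0, phiA_none, hτx0])
                    (fun u hu hnot hne => by
                      rcases h : π u with _ | cu
                      · rw [phiA_none]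
                        have := hB u hu h
                        omega
                      · exfalso
                        exact hnot (mem_RS_of_mem (hDsurv u hu hne cu h)))
                  have h0 := inv.i0
                  have h3 : (R0+1) * (k+1) = (R0+1) * k + R0 + 1 := by ring
                  omega
                · intro v c hv hc
                  have hvne : v ≠ x0 := by
                    intro h
                    exact not_mem_RS_side G s x0 j (hD' ▸ h ▸ hv)
                  exact hDsurv v (RS_mono hsubD hv) hvne c hc
                · intro v hv hneeds
                  exfalso
                  have hvs : v ∈ RS s := RS_mono hsubD hv
                  rcases hneeds with ⟨hnone, hτv⟩ | hinc
                  · have := hB v hvs hnone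
                    omega
                  · exact hinc (cmplAt_mono G hsubD v (π v) (hA v hvs))
                · exact inv.i3
                · intro v hv hinc
                  exfalso
                  have hvs : v ∈ RS s := RS_mono hsubD hv
                  exact hinc (cmplAt_mono G hsubD v (π v) (hA v hvs))
                · intro v w hv hw hiv _
                  exfalso
                  have hvs : v ∈ RS s := RS_mono hsubD hv
                  exact hiv (cmplAt_mono G hsubD v (π v) (hA v hvs))
          · push_neg at hC
            by_cases hD : ∃ u, u ∈ RS s ∧ 2 ≤ (Row s u).card
            · -- CASE D : trim a pinned row
              obtain ⟨u0, hu0RS, hu0card⟩ := hD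
              obtain ⟨cu0, hπu0⟩ : ∃ c, π u0 = some c := by
                rcases h : π u0 with _ | c
                · exact absurd h (hC u0 hu0RS)
                · exact ⟨c, rfl⟩
              have hpin0 : (u0, cu0) ∈ s := inv.i1 _ _ hu0RS hπu0
              obtain ⟨j, hjmem, hjne⟩ : ∃ j ∈ Row s u0, j ≠ cu0 :=
                Finset.exists_mem_ne (by omega) cu0
              have hjs : (u0, j) ∈ s := mem_Row.mp hjmem
              have hpinsurv : ∀ v, v ∈ RS s → ∀ cv, π v = some cv →
                  ¬(cv = j ∧ G.Adj u0 v) := by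
                rintro v hv cv hcv ⟨rfl, hadj⟩
                have hcm := hA v hv
                rw [hcv] at hcm
                exact (hcm u0 hadj.symm) hjs
              refine SimpleGraph.VD.step s k (u0, j) hjs ?_ ?_
              · -- erase child
                have hsub' : s.erase (u0, j) ⊆ s := Finset.erase_subset _ _
                refine ih (s.erase (u0, j)) (k+1) π τ ?_ ?_
                · have hc1 : (s.erase (u0, j)).card = s.card - 1 :=
                    Finset.card_erase_of_mem hjs
                  have hu : (((RS (s.erase (u0, j))).filter fun v => π v = none)).card ≤
                      ((RS s).filter fun v => π v = none).card :=
                    Finset.card_le_card (Finset.filter_subset_filter _ (RS_mono hsub'))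
                  have hpos : 1 ≤ s.card := Finset.card_pos.mpr ⟨_, hjs⟩
                  omega
                · have hu0alive : u0 ∈ RS (s.erase (u0, j)) :=
                    mem_RS_of_mem (Finset.mem_erase.mpr
                      ⟨fun h => hjne (congrArg Prod.snd h).symm, hpin0⟩)
                  constructor
                  · -- i0
                    have hb := Phi_le_of G R0 hsub' π τ inv.i3b u0 0
                      (fun _ habs => absurd hu0alive habs)
                      (fun u hu hnot hne => by
                        exfalso
                        refine hnot (mem_RS_iff_row.mpr ?_)
                        rw [Row_erase_other j hne]
                        exact mem_RS_iff_row.mp hu)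
                    have h0 := inv.i0
                    omega
                  · intro v c hv hc
                    have hvs : v ∈ RS s := RS_mono hsub' hv
                    have hm : (v, c) ∈ s := inv.i1 v c hvs hc
                    refine Finset.mem_erase.mpr ⟨?_, hm⟩
                    intro heq
                    by_cases hvu : v = u0
                    · subst hvu
                      rw [hπu0] at hc
                      have hccu : cu0 = c := by injection hc
                      have hcj : c = j := congrArg Prod.snd heq
                      exact hjne (hcj ▸ hccu ▸ rfl)
                    · exact hvu (congrArg Prod.fst heq)
                  · intro v hv hneeds
                    exfalso
                    have hvs : v ∈ RS s := RS_mono hsub' hv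
                    rcases hneeds with ⟨hnone, _⟩ | hinc
                    · exact (hC v hvs) hnone
                    · exact hinc (cmplAt_mono G hsub' v (π v) (hA v hvs))
                  · exact inv.i3
                  · intro v hv hinc
                    exfalso
                    have hvs : v ∈ RS s := RS_mono hsub' hv
                    exact hinc (cmplAt_mono G hsub' v (π v) (hA v hvs))
                  · intro v w hv hw hiv _
                    exfalso
                    have hvs : v ∈ RS s := RS_mono hsub' hv
                    exact hiv (cmplAt_mono G hsub' v (π v) (hA v hvs))
              · -- side child
                set D := s \ (G □ (⊤ : SimpleGraph (Fin q))).closedNbhdFinset (u0, j) with hD'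
                have hsubD : D ⊆ s := Finset.sdiff_subset
                have hDsurv : ∀ v, v ∈ RS s → v ≠ u0 → ∀ cv, π v = some cv → (v, cv) ∈ D := by
                  intro v hv hne cv hcv
                  rw [hD', mem_sideChild]
                  exact ⟨inv.i1 v cv hv hcv, hne, hpinsurv v hv cv hcv⟩
                refine ih D k π τ ?_ ?_
                · have hDsub : D ⊆ s.erase (u0, j) := by
                    intro p hp
                    rcases p with ⟨a, b⟩
                    rw [hD', mem_sideChild] at hp
                    exact Finset.mem_erase.mpr
                      ⟨fun h => hp.2.1 (congrArg Prod.fst h), hp.1⟩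
                  have hc1 : D.card ≤ s.card - 1 := by
                    have := Finset.card_le_card hDsub
                    rw [Finset.card_erase_of_mem hjs] at this
                    exact this
                  have hu : (((RS D).filter fun v => π v = none)).card ≤
                      ((RS s).filter fun v => π v = none).card :=
                    Finset.card_le_card (Finset.filter_subset_filter _ (RS_mono hsubD))
                  have hpos : 1 ≤ s.card := Finset.card_pos.mpr ⟨_, hjs⟩
                  omega
                · constructor
                  · -- i0
                    have hb := Phi_le_of G R0 hsubD π τ inv.i3b u0 R0
                      (fun _ _ => phiA_le_R0 G R0 (inv.i3 u0)
                        (fun hinc => inv.i3b u0 hu0RS hinc))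
                      (fun u hu hnot hne => by
                        exfalso
                        obtain ⟨cu, hcu⟩ : ∃ c, π u = some c := by
                          rcases h : π u with _ | c
                          · exact absurd h (hC u hu)
                          · exact ⟨c, rfl⟩
                        exact hnot (mem_RS_of_mem (hDsurv u hu hne cu hcu)))
                    have h0 := inv.i0
                    have h3 : (R0+1) * (k+1) = (R0+1) * k + R0 + 1 := by ring
                    omega
                  · intro v c hv hc
                    have hvne : v ≠ u0 := by
                      intro h
                      exact not_mem_RS_side G s u0 j (hD' ▸ h ▸ hv)
                    exact hDsurv v (RS_mono hsubD hv) hvne c hc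
                  · intro v hv hneeds
                    exfalso
                    have hvs : v ∈ RS s := RS_mono hsubD hv
                    rcases hneeds with ⟨hnone, _⟩ | hinc
                    · exact (hC v hvs) hnone
                    · exact hinc (cmplAt_mono G hsubD v (π v) (hA v hvs))
                  · exact inv.i3
                  · intro v hv hinc
                    exfalso
                    have hvs : v ∈ RS s := RS_mono hsubD hv
                    exact hinc (cmplAt_mono G hsubD v (π v) (hA v hvs))
                  · intro v w hv hw hiv _
                    exfalso
                    have hvs : v ∈ RS s := RS_mono hsubD hv
                    exact hiv (cmplAt_mono G hsubD v (π v) (hA v hvs))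
            · push_neg at hD
              -- CASE E : base, edgeless
              have hall : ∀ u ∈ RS s, ∃ cu, π u = some cu := by
                intro u hu
                rcases h : π u with _ | cu
                · exact absurd h (hC u hu)
                · exact ⟨cu, rfl⟩
              have hrow1 : ∀ u ∈ RS s, (Row s u).card = 1 := by
                intro u hu
                have h2 := hD u hu
                have h1 : 1 ≤ (Row s u).card :=
                  Finset.card_pos.mpr (mem_RS_iff_row.mp hu)
                omega
              refine vd_of_edgeless (G □ (⊤ : SimpleGraph (Fin q))) s.card s (k+1) le_rfl ?_ ?_
              · rintro ⟨a, b⟩ hab ⟨a', b'⟩ hab' hadj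
                rw [SimpleGraph.boxProd_adj] at hadj
                have haRS : a ∈ RS s := mem_RS_of_mem hab
                have hcard1 : (Row s a).card ≤ 1 := le_of_eq (hrow1 a haRS)
                rcases hadj with ⟨hadj, hbb⟩ | ⟨hbb, haa⟩
                · obtain ⟨ca, hca⟩ := hall a haRS
                  have hcmem : (a, ca) ∈ s := inv.i1 a ca haRS hca
                  have h1 : ca = b :=
                    Finset.card_le_one.mp hcard1 ca (mem_Row.mpr hcmem) b (mem_Row.mpr hab)
                  have hcm := hA a haRS
                  rw [hca] at hcm
                  refine (hcm a' hadj) ?_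
                  have hbb' : b = b' := hbb
                  rw [h1, hbb']
                  exact hab'
                · have hbb' : (⊤ : SimpleGraph (Fin q)).Adj b b' := hbb
                  rw [SimpleGraph.top_adj] at hbb'
                  have haa' : a = a' := haa
                  subst haa'
                  exact hbb' (Finset.card_le_one.mp hcard1 b (mem_Row.mpr hab) b' (mem_Row.mpr hab'))
              · have hPhi : Phi G R0 s π τ = R0 * (RS s).card := by
                  unfold Phi
                  rw [Finset.sum_congr rfl (fun u hu => ?_)]
                  · rw [Finset.sum_const, smul_eq_mul, mul_comm]
                  · obtain ⟨cu, hcu⟩ := hall u hu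
                    rw [hcu, phiA_some, if_pos]
                    have := hA u hu
                    rw [hcu] at this
                    exact this
                have hcards : s.card = (RS s).card := by
                  rw [card_eq_sum_Row, Finset.sum_congr rfl (fun u hu => hrow1 u hu),
                    Finset.sum_const, smul_eq_mul, mul_one]
                have h0 := inv.i0
                rw [hPhi] at h0
                rw [hcards]
                by_contra hcon
                push_neg at hcon
                have h1 : (RS s).card ≤ k := by omega
                have h2 : R0 * (RS s).card ≤ R0 * k := Nat.mul_le_mul_left R0 h1
                have h3 : (R0+1) * (k+1) = R0 * k + R0 + k + 1 := by ring
                omega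

end VDwork


/-- For every `ε > 0` there are a constant `K > 0` and thresholds `N₀, Δ₀` such that every
graph `G` with `⌈N(1+ε)⌉` vertices (`N ≥ N₀`) and maximal degree `Δ ≥ Δ₀` has
`G □ K_q` being `VD_N` whenever `q > K·Δ`. -/
theorem vd_boxProd_of_linear_degree (ε : ℝ) (hε : 0 < ε) :
    ∃ K : ℝ, 0 < K ∧ ∃ N₀ Δ₀ : ℕ, ∀ N : ℕ, N₀ ≤ N →
      ∀ (V : Type) [Fintype V] [DecidableEq V] (G : SimpleGraph V) [DecidableRel G.Adj],
        Fintype.card V = ⌈(N : ℝ) * (1 + ε)⌉₊ → Δ₀ ≤ G.maxDegree →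
        ∀ q : ℕ, K * (G.maxDegree : ℝ) < (q : ℝ) →
          (G □ (⊤ : SimpleGraph (Fin q))).VD Finset.univ N := by
  classical
  refine ⟨(⌈1/ε⌉₊ : ℝ) + 3, by positivity, 1, 1, ?_⟩
  intro N hN V _ _ G _ hcard hΔ q hq
  set R0 := ⌈1/ε⌉₊ with hR0def
  have hR0 : 1 ≤ R0 := Nat.ceil_pos.mpr (by positivity)
  have hΔ1 : 1 ≤ G.maxDegree := hΔ
  have hqn : (R0 + 3) * G.maxDegree + 1 ≤ q := by
    have h1 : (((R0 + 3) * G.maxDegree : ℕ) : ℝ) < (q : ℝ) := by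
      push_cast
      calc ((R0 : ℝ) + 3) * (G.maxDegree : ℝ) = ((R0 : ℝ) + 3) * (G.maxDegree : ℝ) := rfl
        _ < q := hq
    exact Nat.succ_le_of_lt (by exact_mod_cast h1)
  have hq0 : 0 < q := by
    have : 1 ≤ (R0 + 3) * G.maxDegree := Nat.one_le_iff_ne_zero.mpr (by positivity)
    omega
  -- root data
  have hRSuniv : VDwork.RS (Finset.univ : Finset (V × Fin q)) = (Finset.univ : Finset V) := by
    ext u
    simp only [Finset.mem_univ, iff_true]
    exact VDwork.mem_RS.mpr ⟨⟨0, hq0⟩, Finset.mem_univ _⟩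
  have hRowuniv : ∀ u : V, VDwork.Row (Finset.univ : Finset (V × Fin q)) u
      = (Finset.univ : Finset (Fin q)) := by
    intro u
    ext j
    simp only [Finset.mem_univ, iff_true]
    exact VDwork.mem_Row.mpr (Finset.mem_univ _)
  refine VDwork.main_lemma G R0 hR0
    (3 * (Finset.univ : Finset (V × Fin q)).card + Fintype.card V)
    Finset.univ N (fun _ => none) (fun _ => R0) ?_ ?_
  · -- measure bound
    have h1 : ((VDwork.RS (Finset.univ : Finset (V × Fin q))).filter
        fun u => (fun _ => (none : Option (Fin q))) u = none).card ≤ Fintype.card V := by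
      calc _ ≤ (VDwork.RS (Finset.univ : Finset (V × Fin q))).card := Finset.card_filter_le _ _
        _ = (Finset.univ : Finset V).card := by rw [hRSuniv]
        _ = Fintype.card V := Finset.card_univ
    beta_reduce at h1
    omega
  · constructor
    · -- i0
      have hPhi : VDwork.Phi G R0 (Finset.univ : Finset (V × Fin q))
          (fun _ => none) (fun _ => R0) = Fintype.card V * R0 := by
        unfold VDwork.Phi
        rw [hRSuniv]
        simp only [VDwork.phiA_none]
        rw [Finset.sum_const, smul_eq_mul, Finset.card_univ]
      rw [hPhi]
      have h1 : ((N : ℝ) * (1 + ε)) ≤ (Fintype.card V : ℝ) := by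
        rw [hcard]; exact Nat.le_ceil _
      have h2 : (1 : ℝ) ≤ (R0 : ℝ) * ε := by
        have h3 : 1 / ε ≤ (R0 : ℝ) := Nat.le_ceil _
        calc (1 : ℝ) = (1 / ε) * ε := by field_simp
          _ ≤ (R0 : ℝ) * ε := mul_le_mul_of_nonneg_right h3 (le_of_lt hε)
      have hreal : ((R0 : ℝ) + 1) * (N : ℝ) ≤ (Fintype.card V : ℝ) * (R0 : ℝ) := by
        nlinarith [mul_le_mul_of_nonneg_right h1 (by positivity : (0:ℝ) ≤ (R0:ℝ)),
          mul_le_mul_of_nonneg_left h2 (by positivity : (0:ℝ) ≤ (N:ℝ))]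
      exact_mod_cast hreal
    · intro u c _ hc
      exact nomatch hc
    · -- i2
      intro u _ _
      have hrow : (VDwork.Row (Finset.univ : Finset (V × Fin q)) u).card = q := by
        rw [hRowuniv u, Finset.card_univ, Fintype.card_fin]
      rw [hrow]
      have hsum : ∑ x ∈ VDwork.nbR G (Finset.univ : Finset (V × Fin q)) u,
          VDwork.wtf (Finset.univ : Finset (V × Fin q)) (fun _ => R0) (fun _ => none) u x ≤
          (VDwork.nbR G (Finset.univ : Finset (V × Fin q)) u).card * (R0 + 1) := by
        refine le_trans (Finset.sum_le_card_nsmul _ _ (R0 + 1) (fun x _ => ?_)) (by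
          rw [smul_eq_mul])
        unfold VDwork.wtf
        rw [VDwork.pinBit_none]
        show 1 + R0 + 0 ≤ R0 + 1
        omega
      have hnb : (VDwork.nbR G (Finset.univ : Finset (V × Fin q)) u).card ≤ G.maxDegree := by
        calc (VDwork.nbR G (Finset.univ : Finset (V × Fin q)) u).card
            ≤ (G.neighborFinset u).card := Finset.card_filter_le _ _
          _ = G.degree u := G.card_neighborFinset_eq_degree u
          _ ≤ G.maxDegree := G.degree_le_maxDegree u
      have hmul : (VDwork.nbR G (Finset.univ : Finset (V × Fin q)) u).card * (R0 + 1) ≤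
          G.maxDegree * (R0 + 1) := Nat.mul_le_mul_right _ hnb
      have hfin : G.maxDegree * (R0 + 1) + 2 ≤ q := by
        have : (R0 + 3) * G.maxDegree = G.maxDegree * (R0 + 1) + 2 * G.maxDegree := by ring
        omega
      omega
    · intro u
      exact le_refl R0
    · intro u _ hinc
      exact absurd (VDwork.cmplAt_none G _ u) hinc
    · intro u w _ _ hiu _
      exact absurd (VDwork.cmplAt_none G _ u) hiu
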